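/- Let G be a simple graph on the vertex set {1, …, N} with real Laplacian matrix L (L_{ii} = degree of i, L_{ij} = −1 if {i,j} is an edge, 0 otherwise), and let M ⊆ {1, …, N} be a set of monitored vertices. Suppose that for every v in the range of x ↦ L x, if v_i = 0 for all i ∈ M then v = 0 (i.e., the range of L intersects trivially the subspace of vectors vanishing on M). Then every connected component of G that contains at least one edge contains at least one vertex of M. -/
import Mathlib


open Matrix

/-- Lemma 4, unit weights: Let `G` be a simple graph on `Fin N` with
Laplacian `L` and `M` a set of monitored vertices. If every vector in the range of
`x ↦ L x` vanishing on `M` is zero, then every connected component of `G` containing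
at least one edge contains a monitored vertex. -/
theorem monitored_vertex_in_every_switching_component
    {N : ℕ} (G : SimpleGraph (Fin N)) [DecidableRel G.Adj] (M : Set (Fin N))
    (h : ∀ x : Fin N → ℝ,
      (∀ i ∈ M, (G.lapMatrix ℝ).mulVec x i = 0) → (G.lapMatrix ℝ).mulVec x = 0) :
    ∀ i j : Fin N, G.Adj i j → ∃ k ∈ M, G.Reachable i k := by
  intro i j hij
  by_contra hcon
  push_neg at hcon
  set x : Fin N → ℝ := Pi.single i 1 with hx
  have hxval : ∀ u : Fin N, ¬ G.Reachable i u → x u = 0 := by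
    intro u hu
    have : u ≠ i := by rintro rfl; exact hu (SimpleGraph.Reachable.refl u)
    simp [hx, Pi.single_apply, this.symm]
  have hzero : (G.lapMatrix ℝ).mulVec x = 0 := by
    apply h
    intro k hk
    rw [SimpleGraph.lapMatrix_mulVec_apply]
    have hk0 : x k = 0 := hxval k (hcon k hk)
    have hsum : ∑ u ∈ G.neighborFinset k, x u = 0 := by
      apply Finset.sum_eq_zero
      intro u hu
      apply hxval
      intro hru
      exact hcon k hk (hru.trans (G.mem_neighborFinset k u |>.mp hu).symm.reachable)
    rw [hk0, hsum]
    ring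
  have := congrFun hzero i
  rw [SimpleGraph.lapMatrix_mulVec_apply] at this
  have hxi : x i = 1 := by simp [hx]
  have hsum : ∑ u ∈ G.neighborFinset i, x u = 0 := by
    apply Finset.sum_eq_zero
    intro u hu
    have : u ≠ i := fun he => G.irrefl (he ▸ (G.mem_neighborFinset i u |>.mp hu))
    simp [hx, Pi.single_apply, this.symm]
  rw [hxi, hsum, mul_one, sub_zero] at this
  have hdeg : 0 < G.degree i := (G.degree_pos_iff_exists_adj i).mpr ⟨j, hij⟩
  simp only [Pi.zero_apply] at this
  exact_mod_cast absurd this (by positivity)
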